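/- Let V_{i+1} = V_i + φ_i φ_i^T with V_1 = λ·I for λ > 0, where φ_1,...,φ_m ∈ R^d satisfy ‖φ_i‖_{V_i^{-1}}^2 > 1/2 for all i, and ‖φ_i‖ ≤ R_φ. Then (3/2)^{m/d} ≤ 1 + (m/d)·(R_φ²/λ). -/

import Mathlib

open Matrix

section

set_option linter.unusedSectionVars false
variable {n : Type*} [Fintype n] [DecidableEq n]

lemma aux_psd (u : n → ℝ) : (vecMulVec u u).PosSemidef := by
  refine PosSemidef.of_dotProduct_mulVec_nonneg ?_ ?_
  · ext i j; simp [vecMulVec_apply, conjTranspose_apply, mul_comm]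
  · intro x
    have : star x ⬝ᵥ (vecMulVec u u *ᵥ x) = (u ⬝ᵥ x) * (u ⬝ᵥ x) := by
      simp [dotProduct, mulVec, vecMulVec_apply, Finset.mul_sum, Finset.sum_mul]
      rw [Finset.sum_comm]
      congr 1; ext i; congr 1; ext j; ring
    rw [this]
    exact mul_self_nonneg _

lemma aux_trace (u : n → ℝ) : (vecMulVec u u).trace = u ⬝ᵥ u := by
  simp [trace, vecMulVec_apply, dotProduct, Matrix.diag]

lemma aux_det {A : Matrix n n ℝ} (hA : A.PosDef) (u : n → ℝ) :
    (A + vecMulVec u u).det = A.det * (1 + u ⬝ᵥ (A⁻¹ *ᵥ u)) := by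
  rw [vecMulVec_eq Unit, det_add_replicateCol_mul_replicateRow hA.det_pos.ne'.isUnit]
  congr 1
  rw [det_unique]
  simp [Matrix.mul_apply, dotProduct, mulVec, Finset.mul_sum, Finset.sum_mul]
  rw [Finset.sum_comm]
  congr 1; ext i; congr 1; ext j; ring

lemma aux_amgm {d : ℕ} (hd : 0 < d) {A : Matrix (Fin d) (Fin d) ℝ} (hA : A.PosDef) :
    A.det ^ ((1:ℝ)/d) ≤ A.trace / d := by
  have hH := hA.isHermitian
  have hev : ∀ i, 0 ≤ hH.eigenvalues i := fun i => (hA.eigenvalues_pos i).le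
  have hdet : A.det = ∏ i, hH.eigenvalues i := by
    simpa using hH.det_eq_prod_eigenvalues
  have htr : A.trace = ∑ i, hH.eigenvalues i := by
    simpa using hH.trace_eq_sum_eigenvalues
  have key := Real.geom_mean_le_arith_mean_weighted Finset.univ
    (fun _ => (1:ℝ)/d) hH.eigenvalues (fun i _ => by positivity)
    (by simp; field_simp) (fun i _ => hev i)
  have hprod : A.det ^ ((1:ℝ)/d) = ∏ i, hH.eigenvalues i ^ ((1:ℝ)/d) := by
    rw [hdet, ← Real.finset_prod_rpow _ _ (fun i _ => hev i)]
  rw [hprod, htr]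
  calc ∏ i, hH.eigenvalues i ^ ((1:ℝ)/d) ≤ ∑ i, (1:ℝ)/d * hH.eigenvalues i := key
    _ = (∑ i, hH.eigenvalues i) / d := by rw [← Finset.mul_sum]; ring

end

/-- The elliptic potential argument: if `V_{i+1} = V_i + φ_i φ_iᵀ` with `V_0 = λ I`,
`‖φ_i‖²_{V_i⁻¹} > 1/2` and `‖φ_i‖ ≤ R_φ` for all `i < m`, then
`(3/2)^{m/d} ≤ 1 + (m/d)·(R_φ²/λ)`. -/
theorem stmt_19 (d m : ℕ) (hd : 0 < d) (lam Rphi : ℝ) (hlam : 0 < lam)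
    (φ : ℕ → Fin d → ℝ) (V : ℕ → Matrix (Fin d) (Fin d) ℝ)
    (hV0 : V 0 = lam • (1 : Matrix (Fin d) (Fin d) ℝ))
    (hVs : ∀ i < m, V (i + 1) = V i + Matrix.vecMulVec (φ i) (φ i))
    (hip : ∀ i < m, 1 / 2 < φ i ⬝ᵥ ((V i)⁻¹ *ᵥ φ i))
    (hnorm : ∀ i < m, φ i ⬝ᵥ φ i ≤ Rphi ^ 2) :
    ((3 : ℝ) / 2) ^ ((m : ℝ) / (d : ℝ)) ≤ 1 + ((m : ℝ) / (d : ℝ)) * (Rphi ^ 2 / lam) := by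
  have hd' : (0:ℝ) < d := by exact_mod_cast hd
  -- positive definiteness
  have hpos : ∀ i, i ≤ m → (V i).PosDef := by
    intro i
    induction i with
    | zero =>
      intro _
      rw [hV0, smul_one_eq_diagonal]
      exact posDef_diagonal_iff.mpr (fun _ => hlam)
    | succ k ih =>
      intro hk
      rw [hVs k (by omega)]
      exact (ih (by omega)).add_posSemidef (aux_psd _)
  -- determinant lower bound
  have hdet : ∀ i, i ≤ m → lam ^ d * ((3:ℝ)/2) ^ i ≤ (V i).det := by
    intro i
    induction i with
    | zero =>
      intro _
      rw [hV0, Matrix.det_smul, det_one]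
      simp
    | succ k ih =>
      intro hk
      rw [hVs k (by omega), aux_det (hpos k (by omega))]
      have h32 : (3:ℝ)/2 ≤ 1 + φ k ⬝ᵥ ((V k)⁻¹ *ᵥ φ k) := by
        have := hip k (by omega); linarith
      calc lam ^ d * ((3:ℝ)/2) ^ (k+1) = (lam ^ d * ((3:ℝ)/2) ^ k) * ((3:ℝ)/2) := by ring
        _ ≤ (V k).det * (1 + φ k ⬝ᵥ ((V k)⁻¹ *ᵥ φ k)) := by
            apply mul_le_mul (ih (by omega)) h32 (by norm_num)
            exact (hpos k (by omega)).det_pos.le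
  -- trace upper bound
  have htr : ∀ i, i ≤ m → (V i).trace ≤ d * lam + i * Rphi ^ 2 := by
    intro i
    induction i with
    | zero =>
      intro _
      rw [hV0]
      simp [Matrix.trace_smul, Matrix.trace_one, mul_comm]
    | succ k ih =>
      intro hk
      rw [hVs k (by omega), Matrix.trace_add, aux_trace]
      have h1 := ih (by omega)
      have h2 := hnorm k (by omega)
      push_cast
      linarith
  have hD := hdet m le_rfl
  have hAM := aux_amgm hd (hpos m le_rfl)
  have hT := htr m le_rfl
  have hDpos : 0 < (V m).det := (hpos m le_rfl).det_pos
  have hlamd : (0:ℝ) < lam ^ d := pow_pos hlam d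
  -- rewrite LHS as a rpow of a pow
  have hrw : ((3:ℝ)/2) ^ ((m:ℝ)/(d:ℝ)) = (((3:ℝ)/2) ^ m) ^ ((1:ℝ)/(d:ℝ)) := by
    rw [← Real.rpow_natCast ((3:ℝ)/2) m, ← Real.rpow_mul (by norm_num)]
    ring_nf
  rw [hrw]
  have step1 : (((3:ℝ)/2) ^ m) ^ ((1:ℝ)/(d:ℝ)) ≤ ((V m).det / lam ^ d) ^ ((1:ℝ)/(d:ℝ)) := by
    apply Real.rpow_le_rpow (by positivity) _ (by positivity)
    rw [le_div_iff₀ hlamd]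
    linarith [hD]
  have step2 : ((V m).det / lam ^ d) ^ ((1:ℝ)/(d:ℝ)) = (V m).det ^ ((1:ℝ)/(d:ℝ)) / lam := by
    rw [Real.div_rpow hDpos.le hlamd.le]
    congr 1
    rw [← Real.rpow_natCast lam d, ← Real.rpow_mul hlam.le]
    rw [mul_one_div, div_self (by positivity), Real.rpow_one]
  have step3 : (V m).det ^ ((1:ℝ)/(d:ℝ)) / lam ≤ (lam + (m:ℝ) * Rphi ^ 2 / d) / lam := by
    gcongr
    refine hAM.trans ?_
    rw [div_le_iff₀ hd']
    ring_nf
    have hdd : (m:ℝ) * Rphi ^ 2 * (d:ℝ) * ((d:ℝ))⁻¹ = (m:ℝ) * Rphi ^ 2 := by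
      field_simp
    linarith [hT]
  calc (((3:ℝ)/2) ^ m) ^ ((1:ℝ)/(d:ℝ)) ≤ ((V m).det / lam ^ d) ^ ((1:ℝ)/(d:ℝ)) := step1
    _ = (V m).det ^ ((1:ℝ)/(d:ℝ)) / lam := step2
    _ ≤ (lam + (m:ℝ) * Rphi ^ 2 / d) / lam := step3
    _ = 1 + ((m:ℝ)/(d:ℝ)) * (Rphi ^ 2 / lam) := by field_simp
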